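/- Existence of an equidistant-expectations partition: let f : [0,1] → ℝ be a continuous, strictly positive probability density and let K ≥ 2 be an integer. Then there exists a strictly increasing sequence 0 = μ₀ < μ₁ < ⋯ < μ_K = 1 such that for every k = 1, …, K−1: μ_k − E[μ | (μ_{k−1}, μ_k]] = E[μ | (μ_k, μ_{k+1}]] − μ_k. -/

import Mathlib

open MeasureTheory Set intervalIntegral

/-- Conditional mean of `μ` on the interval `(s, t]` under the density `f`. -/
noncomputable def condMu (f : ℝ → ℝ) (s t : ℝ) : ℝ :=
  (∫ x in Ioc s t, x * f x) / ∫ x in Ioc s t, f x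



noncomputable def cG (G : ℝ → ℝ) (s t : ℝ) : ℝ :=
  (∫ x in s..t, x * G x) / (∫ x in s..t, G x)

/-- mediant inequality -/
lemma mediant_lt {n1 d1 n2 d2 : ℝ} (h1 : 0 < d1) (h2 : 0 < d2) (h : n1 / d1 < n2 / d2) :
    n1 / d1 < (n1 + n2) / (d1 + d2) ∧ (n1 + n2) / (d1 + d2) < n2 / d2 := by
  rw [div_lt_div_iff₀ h1 h2] at h
  constructor
  · rw [div_lt_div_iff₀ h1 (by linarith)]; nlinarith
  · rw [div_lt_div_iff₀ (by linarith) h2]; nlinarith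


section Basic

variable {G : ℝ → ℝ} (hG : Continuous G) (hGpos : ∀ x, 0 < G x)
include hG hGpos

omit hGpos in
lemma intInt (s t : ℝ) : IntervalIntegrable G volume s t := hG.intervalIntegrable s t

omit hGpos in
omit hGpos in
lemma intIntx (s t : ℝ) : IntervalIntegrable (fun x => x * G x) volume s t :=
  (continuous_id.mul hG).intervalIntegrable s t

lemma Dpos {s t : ℝ} (h : s < t) : 0 < ∫ x in s..t, G x :=
  intervalIntegral_pos_of_pos_on (intInt hG s t) (fun x _ => hGpos x) h

lemma lt_cG {s t : ℝ} (h : s < t) : s < cG G s t := by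
  have h1 : 0 < ∫ x in s..t, (x - s) * G x :=
    intervalIntegral_pos_of_pos_on (((continuous_id.sub continuous_const).mul hG).intervalIntegrable s t)
      (fun x hx => mul_pos (by linarith [hx.1]) (hGpos x)) h
  have h2 : (∫ x in s..t, (x - s) * G x) = (∫ x in s..t, x * G x) - s * ∫ x in s..t, G x := by
    rw [← intervalIntegral.integral_const_mul]
    rw [← intervalIntegral.integral_sub (intIntx hG s t) (show IntervalIntegrable (fun x => s * G x) volume s t from (continuous_const.mul hG : Continuous fun x => s * G x).intervalIntegrable s t)]
    congr 1; ext x; ring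
  have hD := Dpos hG hGpos h
  rw [cG, lt_div_iff₀ hD]; nlinarith [h1, h2]

lemma cG_lt {s t : ℝ} (h : s < t) : cG G s t < t := by
  have h1 : 0 < ∫ x in s..t, (t - x) * G x :=
    intervalIntegral_pos_of_pos_on (((continuous_const.sub continuous_id).mul hG).intervalIntegrable s t)
      (fun x hx => mul_pos (by linarith [hx.2]) (hGpos x)) h
  have h2 : (∫ x in s..t, (t - x) * G x) = t * (∫ x in s..t, G x) - ∫ x in s..t, x * G x := by
    rw [← intervalIntegral.integral_const_mul]
    rw [← intervalIntegral.integral_sub (show IntervalIntegrable (fun x => t * G x) volume s t from (continuous_const.mul hG : Continuous fun x => t * G x).intervalIntegrable s t) (intIntx hG s t)]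
    congr 1; ext x; ring
  have hD := Dpos hG hGpos h
  rw [cG, div_lt_iff₀ hD]; nlinarith [h1, h2]

omit hGpos in
lemma cG_split {s t u : ℝ} (hst : s < t) (htu : t < u) :
    cG G s u = ((∫ x in s..t, x * G x) + (∫ x in t..u, x * G x)) /
      ((∫ x in s..t, G x) + (∫ x in t..u, G x)) := by
  rw [cG, integral_add_adjacent_intervals (intIntx hG s t) (intIntx hG t u),
    integral_add_adjacent_intervals (intInt hG s t) (intInt hG t u)]

lemma cG_mono_right {s t u : ℝ} (hst : s < t) (htu : t < u) : cG G s t < cG G s u := by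
  have hd1 := Dpos hG hGpos hst
  have hd2 := Dpos hG hGpos htu
  have hkey : cG G s t < cG G t u := lt_trans (cG_lt hG hGpos hst) (lt_cG hG hGpos htu)
  rw [cG_split hG hst htu]
  exact (mediant_lt hd1 hd2 hkey).1

lemma cG_mono_left {s s' t : ℝ} (hss : s < s') (hst : s' < t) : cG G s t < cG G s' t := by
  have hd1 := Dpos hG hGpos hss
  have hd2 := Dpos hG hGpos hst
  have hkey : cG G s s' < cG G s' t := lt_trans (cG_lt hG hGpos hss) (lt_cG hG hGpos hst)
  rw [cG_split hG hss hst]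
  exact (mediant_lt hd1 hd2 hkey).2

end Basic

lemma contD {G : ℝ → ℝ} (hG : Continuous G) :
    Continuous (fun p : ℝ × ℝ => ∫ x in p.1..p.2, G x) := by
  have hP : Continuous (fun b => ∫ x in (0:ℝ)..b, G x) :=
    intervalIntegral.continuous_primitive (fun a b => intInt hG a b) 0
  have : ∀ p : ℝ × ℝ, (∫ x in p.1..p.2, G x)
      = (∫ x in (0:ℝ)..p.2, G x) - (∫ x in (0:ℝ)..p.1, G x) := by
    intro p
    rw [← intervalIntegral.integral_interval_sub_left (intInt hG 0 p.2) (intInt hG 0 p.1)]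
  simp only [this]
  exact (hP.comp continuous_snd).sub (hP.comp continuous_fst)

lemma contN {G : ℝ → ℝ} (hG : Continuous G) :
    Continuous (fun p : ℝ × ℝ => ∫ x in p.1..p.2, x * G x) :=
  contD (continuous_id.mul hG)

section Phi

variable {G : ℝ → ℝ} {m M : ℝ} (hG : Continuous G) (hGpos : ∀ x, 0 < G x)
  (hm : 0 < m) (hmG : ∀ x, m ≤ G x) (hGM : ∀ x, G x ≤ M)

include hG hGpos in
lemma cG_contAt {p : ℝ × ℝ} (h : p.1 < p.2) :
    ContinuousAt (fun q : ℝ × ℝ => cG G q.1 q.2) p := by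
  apply ContinuousAt.div (contN hG).continuousAt (contD hG).continuousAt
  exact ne_of_gt (Dpos hG hGpos h)

include hG hm hmG hGM in
lemma exists_large {t τ : ℝ} (htτ : t < τ) : ∃ u, t < u ∧ τ < cG G t u := by
  have hGpos : ∀ x, 0 < G x := fun x => lt_of_lt_of_le hm (hmG x)
  have hM : 0 < M := lt_of_lt_of_le hm (le_trans (hmG 0) (hGM 0))
  set v := τ + 1 with hv
  have htv : t < v := by linarith
  set u := v + M * (v - t) ^ 2 / m with hu
  have hcor : 0 ≤ M * (v - t) ^ 2 / m :=
    div_nonneg (mul_nonneg (le_of_lt hM) (sq_nonneg _)) (le_of_lt hm)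
  have huv : v ≤ u := by simp only [hu]; linarith
  have htu : t < u := lt_of_lt_of_le htv huv
  refine ⟨u, htu, ?_⟩
  have hiv : ∀ a b : ℝ, IntervalIntegrable (fun x => (x - v) * G x) volume a b :=
    fun a b => Continuous.intervalIntegrable (by continuity) a b
  have hD : 0 < ∫ x in t..u, G x := Dpos hG hGpos htu
  have hDlb : m * (u - t) ≤ ∫ x in t..u, G x := by
    have h0 : (∫ x in t..u, (m : ℝ)) ≤ ∫ x in t..u, G x := by
      apply intervalIntegral.integral_mono_on (le_of_lt htu)
        (intervalIntegrable_const) (intInt hG t u)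
      exact fun x _ => hmG x
    rw [intervalIntegral.integral_const, smul_eq_mul] at h0
    linarith
  have hsplit : (∫ x in t..u, (x - v) * G x)
      = (∫ x in t..v, (x - v) * G x) + ∫ x in v..u, (x - v) * G x :=
    (intervalIntegral.integral_add_adjacent_intervals (hiv t v) (hiv v u)).symm
  have h2 : (0:ℝ) ≤ ∫ x in v..u, (x - v) * G x := by
    apply intervalIntegral.integral_nonneg huv
    intro x hx
    exact mul_nonneg (by linarith [hx.1]) (le_of_lt (hGpos x))
  have h3 : (∫ x in t..v, (-(v - t) * M : ℝ)) ≤ ∫ x in t..v, (x - v) * G x := by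
    apply intervalIntegral.integral_mono_on (le_of_lt htv)
      (intervalIntegrable_const) (hiv t v)
    intro x hx
    have h4 : -(v - t) ≤ x - v := by linarith [hx.1]
    have h5 : x - v ≤ 0 := by linarith [hx.2]
    have h6 : (x - v) * M ≤ (x - v) * G x := mul_le_mul_of_nonpos_left (hGM x) h5
    have h7 : -(v - t) * M ≤ (x - v) * M :=
      mul_le_mul_of_nonneg_right h4 (le_of_lt hM)
    linarith
  have h3' : -((v - t) ^ 2 * M) ≤ ∫ x in t..v, (x - v) * G x := by
    rw [intervalIntegral.integral_const, smul_eq_mul] at h3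
    nlinarith [h3]
  have hNsplit : (∫ x in t..u, x * G x)
      = (∫ x in t..u, (x - v) * G x) + v * ∫ x in t..u, G x := by
    rw [← intervalIntegral.integral_const_mul]
    rw [← intervalIntegral.integral_add (hiv t u)
      ((Continuous.intervalIntegrable (by continuity) t u :
        IntervalIntegrable (fun x => v * G x) volume t u))]
    congr 1; ext x; ring
  rw [cG, lt_div_iff₀ hD]
  have hDlb2 : M * (v - t) ^ 2 < ∫ x in t..u, G x := by
    have h6 : m * (u - t) = m * (v - t) + M * (v - t) ^ 2 := by
      simp only [hu]; field_simp; ring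
    nlinarith [hDlb, h6, hm, htv]
  nlinarith [hNsplit, hsplit, h2, h3', hDlb2, hD]

include hG hGpos hm hmG hGM in
lemma exists_Phi {s t : ℝ} (h : s < t) :
    ∃ u, t < u ∧ cG G t u = 2 * t - cG G s t := by
  set τ := 2 * t - cG G s t with hτ
  have hτt : t < τ := by have := cG_lt hG hGpos h; simp only [hτ]; linarith
  set u₀ := (t + τ) / 2 with hu₀
  have h1 : t < u₀ := by simp only [hu₀]; linarith
  have h2 : u₀ < τ := by simp only [hu₀]; linarith
  have hlow : cG G t u₀ < τ := lt_trans (cG_lt hG hGpos h1) h2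
  obtain ⟨u₁, hu₁, hhigh⟩ := exists_large hG hm hmG hGM hτt
  have hb : u₀ < u₁ := by
    by_contra hc
    push_neg at hc
    have : cG G t u₁ ≤ cG G t u₀ := by
      rcases eq_or_lt_of_le hc with he | hl
      · rw [he]
      · exact le_of_lt (cG_mono_right hG hGpos hu₁ hl)
    linarith
  have hcont : ContinuousOn (fun u => cG G t u) (Icc u₀ u₁) := by
    intro u hu
    have : t < u := lt_of_lt_of_le h1 hu.1
    exact ((cG_contAt hG hGpos (p := (t, u)) this).comp
      (Continuous.continuousAt (by continuity))).continuousWithinAt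
  have hmem : τ ∈ Icc (cG G t u₀) (cG G t u₁) := ⟨le_of_lt hlow, le_of_lt hhigh⟩
  obtain ⟨u, hu, hcu⟩ := intermediate_value_Icc (le_of_lt hb) hcont hmem
  exact ⟨u, lt_of_lt_of_le h1 hu.1, hcu⟩

end Phi

open scoped Classical in
noncomputable def Phi (G : ℝ → ℝ) (s t : ℝ) : ℝ :=
  if h : ∃ u, t < u ∧ cG G t u = 2 * t - cG G s t then h.choose else t + 1

section Phi2

variable {G : ℝ → ℝ} {m M : ℝ} (hG : Continuous G) (hGpos : ∀ x, 0 < G x)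
  (hm : 0 < m) (hmG : ∀ x, m ≤ G x) (hGM : ∀ x, G x ≤ M)
include hG hGpos hm hmG hGM in
lemma Phi_spec {s t : ℝ} (h : s < t) :
    t < Phi G s t ∧ cG G t (Phi G s t) = 2 * t - cG G s t := by
  have hex := exists_Phi hG hGpos hm hmG hGM h
  rw [Phi, dif_pos hex]
  exact hex.choose_spec

end Phi2

section PhiCont

lemma contAt_comp2 {α : Type*} [TopologicalSpace α] {g : ℝ × ℝ → ℝ} {f : α → ℝ × ℝ} {x : α}
    (hg : ContinuousAt g (f x)) (hf : ContinuousAt f x) :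
    ContinuousAt (fun y => g (f y)) x := ContinuousAt.comp hg hf

variable {G : ℝ → ℝ} {m M : ℝ} (hG : Continuous G) (hGpos : ∀ x, 0 < G x)
  (hm : 0 < m) (hmG : ∀ x, m ≤ G x) (hGM : ∀ x, G x ≤ M)

include hG hGpos hm hmG hGM in
lemma Phi_contAt {p₀ : ℝ × ℝ} (h : p₀.1 < p₀.2) :
    ContinuousAt (fun p : ℝ × ℝ => Phi G p.1 p.2) p₀ := by
  obtain ⟨hu₀, hc₀⟩ := Phi_spec hG hGpos hm hmG hGM h
  set u₀ := Phi G p₀.1 p₀.2 with hu₀def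
  rw [ContinuousAt, Metric.tendsto_nhds]
  intro ε hε
  set ε' := min (ε / 2) ((u₀ - p₀.2) / 2) with hε'
  have hε'pos : 0 < ε' := lt_min (by linarith) (by linarith)
  have hε'lt : ε' < ε := lt_of_le_of_lt (min_le_left _ _) (by linarith)
  have ht₀lt : p₀.2 < u₀ - ε' := by
    have : ε' ≤ (u₀ - p₀.2) / 2 := min_le_right _ _
    linarith
  have hlt2 : u₀ - ε' < u₀ := by linarith
  -- continuity of auxiliary maps at p₀
  have hτcont : ContinuousAt (fun p : ℝ × ℝ => 2 * p.2 - cG G p.1 p.2) p₀ := by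
    exact (ContinuousAt.mul continuousAt_const continuous_snd.continuousAt).sub
      (cG_contAt hG hGpos h)
  have hinner : Continuous (fun p : ℝ × ℝ => ((p.2, u₀ - ε') : ℝ × ℝ)) :=
    continuous_snd.prodMk continuous_const
  have hinner' : Continuous (fun p : ℝ × ℝ => ((p.2, u₀ + ε') : ℝ × ℝ)) :=
    continuous_snd.prodMk continuous_const
  have hlocont : ContinuousAt (fun p : ℝ × ℝ => cG G p.2 (u₀ - ε')) p₀ := by
    exact contAt_comp2 (g := fun q : ℝ × ℝ => cG G q.1 q.2)
      (f := fun p : ℝ × ℝ => ((p.2, u₀ - ε') : ℝ × ℝ))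
      (cG_contAt hG hGpos ht₀lt) hinner.continuousAt
  have hhicont : ContinuousAt (fun p : ℝ × ℝ => cG G p.2 (u₀ + ε')) p₀ := by
    have hlt : p₀.2 < u₀ + ε' := by linarith
    exact contAt_comp2 (g := fun q : ℝ × ℝ => cG G q.1 q.2)
      (f := fun p : ℝ × ℝ => ((p.2, u₀ + ε') : ℝ × ℝ))
      (cG_contAt hG hGpos hlt) hinner'.continuousAt
  -- strict inequalities at p₀
  have hlo : cG G p₀.2 (u₀ - ε') < 2 * p₀.2 - cG G p₀.1 p₀.2 := by
    rw [← hc₀]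
    exact cG_mono_right hG hGpos ht₀lt hlt2
  have hhi : 2 * p₀.2 - cG G p₀.1 p₀.2 < cG G p₀.2 (u₀ + ε') := by
    rw [← hc₀]
    exact cG_mono_right hG hGpos hu₀ (by linarith)
  have e1 : ∀ᶠ p : ℝ × ℝ in nhds p₀, p.1 < p.2 :=
    ContinuousAt.eventually_lt continuous_fst.continuousAt continuous_snd.continuousAt h
  have e2 : ∀ᶠ p : ℝ × ℝ in nhds p₀, p.2 < u₀ - ε' :=
    ContinuousAt.eventually_lt continuous_snd.continuousAt continuousAt_const ht₀lt
  have e3 : ∀ᶠ p : ℝ × ℝ in nhds p₀,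
      cG G p.2 (u₀ - ε') < 2 * p.2 - cG G p.1 p.2 :=
    ContinuousAt.eventually_lt hlocont hτcont hlo
  have e4 : ∀ᶠ p : ℝ × ℝ in nhds p₀,
      2 * p.2 - cG G p.1 p.2 < cG G p.2 (u₀ + ε') :=
    ContinuousAt.eventually_lt hτcont hhicont hhi
  filter_upwards [e1, e2, e3, e4] with p hp1 hp2 hp3 hp4
  obtain ⟨hup, hcp⟩ := Phi_spec hG hGpos hm hmG hGM hp1
  set u := Phi G p.1 p.2 with hudef
  have hlb : u₀ - ε' < u := by
    by_contra hcon
    push_neg at hcon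
    have : cG G p.2 u ≤ cG G p.2 (u₀ - ε') := by
      rcases eq_or_lt_of_le hcon with he | hl
      · rw [he]
      · exact le_of_lt (cG_mono_right hG hGpos hup hl)
    rw [hcp] at this
    linarith
  have hub : u < u₀ + ε' := by
    by_contra hcon
    push_neg at hcon
    have : cG G p.2 (u₀ + ε') ≤ cG G p.2 u := by
      rcases eq_or_lt_of_le hcon with he | hl
      · rw [← he]
      · exact le_of_lt (cG_mono_right hG hGpos (lt_trans hp2 (by linarith)) hl)
    rw [hcp] at this
    linarith
  rw [Real.dist_eq, abs_lt]
  constructor <;> [linarith; linarith]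

end PhiCont

noncomputable def seqG (G : ℝ → ℝ) (a : ℝ) : ℕ → ℝ × ℝ
  | 0 => (0, a)
  | n + 1 => ((seqG G a n).2, Phi G (seqG G a n).1 (seqG G a n).2)

noncomputable def mQ (G : ℝ → ℝ) (a : ℝ) (n : ℕ) : ℝ := (seqG G a n).1

section Seq

variable {G : ℝ → ℝ} {m M : ℝ} (hG : Continuous G) (hGpos : ∀ x, 0 < G x)
  (hm : 0 < m) (hmG : ∀ x, m ≤ G x) (hGM : ∀ x, G x ≤ M)

lemma mQ_zero (a : ℝ) : mQ G a 0 = 0 := rfl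

lemma mQ_one (a : ℝ) : mQ G a 1 = a := rfl

lemma mQ_succ (a : ℝ) (n : ℕ) : mQ G a (n + 1) = (seqG G a n).2 := rfl

include hG hGpos hm hmG hGM in
lemma seqG_lt {a : ℝ} (ha : 0 < a) : ∀ n, (seqG G a n).1 < (seqG G a n).2 := by
  intro n
  induction n with
  | zero => exact ha
  | succ n ih =>
    have := (Phi_spec hG hGpos hm hmG hGM ih).1
    simpa [seqG] using this

include hG hGpos hm hmG hGM in
lemma mQ_lt {a : ℝ} (ha : 0 < a) (n : ℕ) : mQ G a n < mQ G a (n + 1) :=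
  seqG_lt hG hGpos hm hmG hGM ha n

include hG hGpos hm hmG hGM in
lemma mQ_mono {a : ℝ} (ha : 0 < a) : StrictMono (mQ G a) :=
  strictMono_nat_of_lt_succ (mQ_lt hG hGpos hm hmG hGM ha)

include hG hGpos hm hmG hGM in
lemma mQ_eq {a : ℝ} (ha : 0 < a) (n : ℕ) :
    cG G (mQ G a (n + 1)) (mQ G a (n + 2)) =
      2 * mQ G a (n + 1) - cG G (mQ G a n) (mQ G a (n + 1)) := by
  have hlt := seqG_lt hG hGpos hm hmG hGM ha n
  have := (Phi_spec hG hGpos hm hmG hGM hlt).2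
  exact this

include hG hGpos hm hmG hGM in
lemma seqG_contAt {a : ℝ} (ha : 0 < a) (n : ℕ) :
    ContinuousAt (fun b => seqG G b n) a := by
  induction n with
  | zero =>
    exact (continuous_const.prodMk continuous_id).continuousAt
  | succ n ih =>
    have h1 : ContinuousAt (fun b => (seqG G b n).2) a :=
      contAt_comp2 (g := Prod.snd) continuous_snd.continuousAt ih
    have h2 : ContinuousAt (fun b => Phi G (seqG G b n).1 (seqG G b n).2) a :=
      contAt_comp2 (g := fun p : ℝ × ℝ => Phi G p.1 p.2)
        (Phi_contAt hG hGpos hm hmG hGM (seqG_lt hG hGpos hm hmG hGM ha n)) ih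
    exact (h1.prodMk h2 : ContinuousAt
      (fun b => (((seqG G b n).2), Phi G (seqG G b n).1 (seqG G b n).2)) a)

include hG hGpos hm hmG hGM in
lemma mQ_contAt {a : ℝ} (ha : 0 < a) (n : ℕ) :
    ContinuousAt (fun b => mQ G b n) a :=
  contAt_comp2 (g := Prod.fst) continuous_fst.continuousAt
    (seqG_contAt hG hGpos hm hmG hGM ha n)

end Seq

noncomputable def dSeq (G : ℝ → ℝ) : ℕ → ℝ
  | 0 => 1
  | j + 1 => min (dSeq G j) (cG G 0 (dSeq G j) / 2)

section Bounds

variable {G : ℝ → ℝ} {m M : ℝ} (hG : Continuous G) (hGpos : ∀ x, 0 < G x)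
  (hm : 0 < m) (hmG : ∀ x, m ≤ G x) (hGM : ∀ x, G x ≤ M)

include hG hGpos in
lemma dSeq_pos : ∀ j, 0 < dSeq G j := by
  intro j
  induction j with
  | zero => exact one_pos
  | succ j ih =>
    exact lt_min ih (by linarith [lt_cG hG hGpos (show (0:ℝ) < dSeq G j from ih)])

include hG hGpos hm hmG hGM in
lemma mQ_nonneg {a : ℝ} (ha : 0 < a) (n : ℕ) : 0 ≤ mQ G a n := by
  have := (mQ_mono hG hGpos hm hmG hGM ha).monotone (Nat.zero_le n)
  simpa [mQ_zero] using this

include hG hGpos hm hmG hGM in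
lemma mQ_pos {a : ℝ} (ha : 0 < a) {n : ℕ} (hn : 1 ≤ n) : 0 < mQ G a n := by
  have := (mQ_mono hG hGpos hm hmG hGM ha).monotone hn
  have h1 : mQ G a 1 = a := mQ_one a
  linarith [this, ha, h1.symm.le]

include hG hGpos hm hmG hGM in
lemma mQ_upper {K : ℕ} (hK : 2 ≤ K) :
    1 < mQ G ((1 + cG G 0 1) / 2) K := by
  set μ := cG G 0 1 with hμ
  have h01 : (0:ℝ) < 1 := one_pos
  have hμl : 0 < μ := lt_cG hG hGpos h01
  have hμu : μ < 1 := cG_lt hG hGpos h01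
  set a := (1 + μ) / 2 with ha
  have hapos : 0 < a := by simp only [ha]; linarith
  have ha1 : a < 1 := by simp only [ha]; linarith
  have heq := mQ_eq hG hGpos hm hmG hGM hapos 0
  rw [mQ_one, mQ_zero] at heq
  have hc0a : cG G 0 a < μ := cG_mono_right hG hGpos hapos ha1
  have hlt12 : mQ G a 1 < mQ G a 2 := mQ_lt hG hGpos hm hmG hGM hapos 1
  rw [mQ_one] at hlt12
  have hcb : cG G a (mQ G a 2) < mQ G a 2 := cG_lt hG hGpos hlt12
  have h2 : 1 < mQ G a 2 := by
    have : cG G a (mQ G a 2) = 2 * a - cG G 0 a := heq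
    have : cG G a (mQ G a 2) > 2 * a - μ := by linarith
    simp only [ha] at this
    linarith
  calc 1 < mQ G a 2 := h2
    _ ≤ mQ G a K := (mQ_mono hG hGpos hm hmG hGM hapos).monotone hK

include hG hGpos hm hmG hGM in
lemma mQ_lower {K : ℕ} (hK : 1 ≤ K) {a : ℝ} (ha : 0 < a)
    (hale : a ≤ dSeq G (K - 1) / 2) : mQ G a K < 1 := by
  have hd := dSeq_pos hG hGpos
  have key : ∀ k, 1 ≤ k → k ≤ K → mQ G a k < dSeq G (K - k) := by
    intro k hk1
    induction k, hk1 using Nat.le_induction with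
    | base =>
      intro _
      rw [mQ_one]
      calc a ≤ dSeq G (K - 1) / 2 := hale
        _ < dSeq G (K - 1) := by linarith [hd (K - 1)]
    | succ k hk1 ih =>
      intro hkK
      have hkK' : k ≤ K := le_of_lt (Nat.lt_of_succ_le hkK)
      have ihk := ih hkK'
      -- the recursive equation at step k (k = n + 1)
      obtain ⟨n, rfl⟩ : ∃ n, k = n + 1 := ⟨k - 1, by omega⟩
      have heq := mQ_eq hG hGpos hm hmG hGM ha n
      have h0le : 0 ≤ mQ G a n := mQ_nonneg hG hGpos hm hmG hGM ha n
      have hlt1 : mQ G a n < mQ G a (n + 1) := mQ_lt hG hGpos hm hmG hGM ha n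
      have hlt2 : mQ G a (n + 1) < mQ G a (n + 2) := mQ_lt hG hGpos hm hmG hGM ha (n + 1)
      have hcl : mQ G a n < cG G (mQ G a n) (mQ G a (n + 1)) := lt_cG hG hGpos hlt1
      have hstep : cG G (mQ G a (n + 1)) (mQ G a (n + 2)) < 2 * mQ G a (n + 1) := by
        rw [heq]; linarith
      have hpos1 : 0 < mQ G a (n + 1) :=
        mQ_pos hG hGpos hm hmG hGM ha (by omega)
      have hml : cG G 0 (mQ G a (n + 2)) < cG G (mQ G a (n + 1)) (mQ G a (n + 2)) :=
        cG_mono_left hG hGpos hpos1 hlt2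
      have hc0 : cG G 0 (mQ G a (n + 2)) < 2 * mQ G a (n + 1) := by linarith
      -- compare with the threshold sequence
      have hKk : K - (n + 1) = (K - (n + 2)) + 1 := by omega
      have hdle : dSeq G (K - (n + 1)) ≤ cG G 0 (dSeq G (K - (n + 2))) / 2 := by
        rw [hKk]
        exact min_le_right _ _
      have hfin : cG G 0 (mQ G a (n + 2)) < cG G 0 (dSeq G (K - (n + 2))) := by
        calc cG G 0 (mQ G a (n + 2)) < 2 * mQ G a (n + 1) := hc0
          _ < 2 * dSeq G (K - (n + 1)) := by linarith [ihk]
          _ ≤ cG G 0 (dSeq G (K - (n + 2))) := by linarith [hdle]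
      by_contra hcon
      push_neg at hcon
      have : cG G 0 (dSeq G (K - (n + 2))) ≤ cG G 0 (mQ G a (n + 2)) := by
        rcases eq_or_lt_of_le hcon with he | hl
        · rw [he]
        · exact le_of_lt (cG_mono_right hG hGpos (hd _) hl)
      linarith
  have := key K (by omega) le_rfl
  simpa [dSeq] using this

end Bounds

/-- **Existence of an equidistant-expectations partition** (Lemma 3): for every
continuous, strictly positive probability density `f` on `[0, 1]` and every `K ≥ 2`,
there is a strictly increasing sequence `0 = μ₀ < μ₁ < ⋯ < μ_K = 1` such that each
interior cutoff `μ_k` is equidistant from the conditional means of the two adjacent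
intervals:
`μ_k - E[μ | (μ_{k-1}, μ_k]] = E[μ | (μ_k, μ_{k+1}]] - μ_k` for `k = 1, …, K-1`. -/

theorem exists_equidistant_expectations_partition
    (f : ℝ → ℝ) (hf : ContinuousOn f (Icc 0 1))
    (hfpos : ∀ x ∈ Icc (0 : ℝ) 1, 0 < f x)
    (hf1 : (∫ x in Icc (0 : ℝ) 1, f x) = 1)
    (K : ℕ) (hK : 2 ≤ K) :
    ∃ m : ℕ → ℝ,
      m 0 = 0 ∧ m K = 1 ∧ (∀ k < K, m k < m (k + 1)) ∧
      ∀ k, 1 ≤ k → k < K →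
        m k - condMu f (m (k - 1)) (m k) = condMu f (m k) (m (k + 1)) - m k := by
  classical
  set G : ℝ → ℝ := fun x => f (max 0 (min 1 x)) with hGdef
  have hclamp : ∀ x : ℝ, max 0 (min 1 x) ∈ Icc (0:ℝ) 1 := fun x =>
    ⟨le_max_left _ _, max_le zero_le_one (min_le_left _ _)⟩
  have hG : Continuous G := hf.comp_continuous (continuous_const.max (continuous_const.min continuous_id)) hclamp
  have hGeq : ∀ x ∈ Icc (0:ℝ) 1, G x = f x := by
    intro x hx
    simp only [hGdef]
    rw [min_eq_right hx.2, max_eq_right hx.1]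
  obtain ⟨xm, hxm, hxmin⟩ := isCompact_Icc.exists_isMinOn
    (Set.nonempty_Icc.mpr zero_le_one) hf
  obtain ⟨xM, hxM, hxmax⟩ := isCompact_Icc.exists_isMaxOn
    (Set.nonempty_Icc.mpr zero_le_one) hf
  set mlb := f xm with hmlb
  set Mub := f xM with hMub
  have hm : 0 < mlb := hfpos xm hxm
  have hmG : ∀ x, mlb ≤ G x := fun x => isMinOn_iff.mp hxmin _ (hclamp x)
  have hGM : ∀ x, G x ≤ Mub := fun x => isMaxOn_iff.mp hxmax _ (hclamp x)
  have hGpos : ∀ x, 0 < G x := fun x => lt_of_lt_of_le hm (hmG x)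
  -- conversion between condMu and cG
  have hconv : ∀ s t : ℝ, 0 ≤ s → s < t → t ≤ 1 → condMu f s t = cG G s t := by
    intro s t h0 hst ht1
    have hsub : uIcc s t ⊆ Icc (0:ℝ) 1 := by
      rw [uIcc_of_le (le_of_lt hst)]
      exact Icc_subset_Icc h0 ht1
    have e1 : (∫ x in s..t, x * G x) = ∫ x in s..t, x * f x :=
      intervalIntegral.integral_congr (fun x hx => by rw [hGeq x (hsub hx)])
    have e2 : (∫ x in s..t, G x) = ∫ x in s..t, f x :=
      intervalIntegral.integral_congr (fun x hx => hGeq x (hsub hx))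
    rw [condMu, cG, e1, e2, intervalIntegral.integral_of_le (le_of_lt hst),
      intervalIntegral.integral_of_le (le_of_lt hst)]
  -- endpoints for the shooting parameter
  set a₁ := (1 + cG G 0 1) / 2 with ha₁def
  have hμl : 0 < cG G 0 1 := lt_cG hG hGpos one_pos
  have hμu : cG G 0 1 < 1 := cG_lt hG hGpos one_pos
  have ha₁pos : 0 < a₁ := by simp only [ha₁def]; linarith
  set a₀ := min (dSeq G (K - 1) / 2) a₁ with ha₀def
  have hdpos : 0 < dSeq G (K - 1) := dSeq_pos hG hGpos (K - 1)
  have ha₀pos : 0 < a₀ := lt_min (by linarith) ha₁pos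
  have ha₀₁ : a₀ ≤ a₁ := min_le_right _ _
  have hcontF : ContinuousOn (fun a => mQ G a K) (Icc a₀ a₁) := fun a ha =>
    (mQ_contAt hG hGpos hm hmG hGM (lt_of_lt_of_le ha₀pos ha.1) K).continuousWithinAt
  have hlow : mQ G a₀ K < 1 :=
    mQ_lower hG hGpos hm hmG hGM (by omega) ha₀pos (min_le_left _ _)
  have hhigh : 1 < mQ G a₁ K := mQ_upper hG hGpos hm hmG hGM hK
  have h1mem : (1:ℝ) ∈ Icc (mQ G a₀ K) (mQ G a₁ K) := ⟨le_of_lt hlow, le_of_lt hhigh⟩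
  obtain ⟨a, haI, haeq⟩ := intermediate_value_Icc ha₀₁ hcontF h1mem
  have hapos : 0 < a := lt_of_lt_of_le ha₀pos haI.1
  have hmono := mQ_mono hG hGpos hm hmG hGM hapos
  refine ⟨mQ G a, rfl, haeq, fun k _ => mQ_lt hG hGpos hm hmG hGM hapos k, ?_⟩
  intro k hk1 hkK
  obtain ⟨n, rfl⟩ : ∃ n, k = n + 1 := ⟨k - 1, by omega⟩
  have heq := mQ_eq hG hGpos hm hmG hGM hapos n
  have h0n : 0 ≤ mQ G a n := mQ_nonneg hG hGpos hm hmG hGM hapos n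
  have hn1 : mQ G a n < mQ G a (n + 1) := mQ_lt hG hGpos hm hmG hGM hapos n
  have hn2 : mQ G a (n + 1) < mQ G a (n + 2) := mQ_lt hG hGpos hm hmG hGM hapos (n + 1)
  have hle1 : mQ G a (n + 1) ≤ 1 := by
    rw [← haeq]
    exact hmono.monotone (show n + 1 ≤ K by omega)
  have hle2 : mQ G a (n + 2) ≤ 1 := by
    rw [← haeq]
    exact hmono.monotone (show n + 2 ≤ K by omega)
  have hidx : n + 1 - 1 = n := rfl
  rw [hidx, hconv _ _ h0n hn1 hle1, hconv _ _ (le_trans h0n (le_of_lt hn1)) hn2 hle2]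
  linarith [heq]
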